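/- Let E be a finite set of edges with values d_e ∈ [0,1], let 0 < α ≤ 1/4, and let C ⊆ E be the random edge set obtained by including each edge e independently with probability min(1, d_e/α). Let t ⊆ E be a subset and r ≥ 2 an integer with Σ_{e ∈ t} d_e ≥ r − 1. Then the probability that t contains fewer than r − 1 edges of C satisfies ℙ(|C ∩ t| < r − 1) ≤ e^4 · exp(−1/(2α)). -/

import Mathlib

open MeasureTheory ProbabilityTheory Real

/-- Under randomized rounding with threshold `0 < α ≤ 1/4`, for any `t ⊆ E` with
`Σ_{e ∈ t} d e ≥ r - 1` and integer `r ≥ 2`, the probability that `t` contains fewer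
than `r - 1` selected edges is at most `e^4 · exp (-1/(2α))`. -/
theorem stmt8 {E : Type*} [Fintype E] [DecidableEq E] {Ω : Type*} [MeasurableSpace Ω]
    (μ : Measure Ω) [IsProbabilityMeasure μ]
    (d : E → ℝ) (hd0 : ∀ e, 0 ≤ d e) (hd1 : ∀ e, d e ≤ 1)
    (α : ℝ) (hα : 0 < α) (hα4 : α ≤ 1 / 4)
    (Z : E → Ω → Bool)
    (hZmeas : ∀ e, Measurable (Z e))
    (hZindep : iIndepFun Z μ)
    (hZprob : ∀ e, (μ {ω | Z e ω = true}).toReal = min 1 (d e / α))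
    (t : Finset E) (r : ℕ) (hr : 2 ≤ r) (ht : (r : ℝ) - 1 ≤ ∑ e ∈ t, d e) :
    (μ {ω | ((t.filter fun e => Z e ω = true).card : ℝ) < (r : ℝ) - 1}).toReal
      ≤ exp 4 * exp (-(1 / (2 * α))) := by
  classical
  have hα1 : α ≤ 1 := by linarith
  set s : ℝ := Real.log α with hs_def
  have hs0 : s ≤ 0 := Real.log_nonpos hα.le hα1
  have hes : Real.exp s = α := Real.exp_log hα
  set p : E → ℝ := fun e => min 1 (d e / α) with hp_def
  have hp0 : ∀ e, 0 ≤ p e := fun e => le_min one_pos.le (div_nonneg (hd0 e) hα.le)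
  have hp1 : ∀ e, p e ≤ 1 := fun e => min_le_left _ _
  set Y : E → Ω → ℝ := fun e ω => if Z e ω = true then 1 else 0 with hY_def
  have hYmeas : ∀ e, Measurable (Y e) := fun e =>
    (measurable_of_countable (fun b : Bool => if b = true then (1:ℝ) else 0)).comp (hZmeas e)
  have hYindep : iIndepFun Y μ :=
    hZindep.comp (fun _ b => if b = true then (1:ℝ) else 0) (fun _ => measurable_of_countable _)
  set A : Finset E := t.filter (fun e => α ≤ d e) with hA_def
  set B : Finset E := t.filter (fun e => d e < α) with hB_def
  set k : ℕ := A.card with hk_def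
  set me : ℝ := (r : ℝ) - 1 - k with hme_def
  set XB : Ω → ℝ := ∑ e ∈ B, Y e with hXB_def
  have hXBapp : ∀ ω, XB ω = ((B.filter fun e => Z e ω = true).card : ℝ) := by
    intro ω
    rw [hXB_def, Finset.sum_apply]
    simp [hY_def, Finset.sum_boole]
  have hXB0 : ∀ ω, 0 ≤ XB ω := by
    intro ω; rw [hXBapp]; positivity
  set T : Set Ω := {ω | XB ω ≤ me - 1} with hT_def
  -- the capped edges are selected almost surely
  have hms : ∀ e, MeasurableSet {ω | Z e ω = true} :=
    fun e => hZmeas e (measurableSet_singleton true)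
  have hAtrue : ∀ e ∈ A, μ {ω | Z e ω = false} = 0 := by
    intro e he
    have hde : α ≤ d e := (Finset.mem_filter.mp he).2
    have hd : (1:ℝ) ≤ d e / α := (one_le_div hα).mpr hde
    have h1 : (μ {ω | Z e ω = true}).toReal = 1 := by
      rw [hZprob e]; exact min_eq_left hd
    have hone : μ {ω | Z e ω = true} = 1 := (ENNReal.toReal_eq_one_iff _).mp h1
    have hcompl : {ω | Z e ω = false} = {ω | Z e ω = true}ᶜ := by
      ext ω; simp
    rw [hcompl, prob_compl_eq_zero_iff (hms e)]
    exact hone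
  have hU0 : μ (⋃ e ∈ A, {ω | Z e ω = false}) = 0 := by
    refine le_antisymm ?_ zero_le
    calc μ (⋃ e ∈ A, {ω | Z e ω = false}) ≤ ∑ e ∈ A, μ {ω | Z e ω = false} :=
          measure_biUnion_finset_le A _
      _ = 0 := Finset.sum_eq_zero hAtrue
  -- event inclusion
  have hsub : {ω | ((t.filter fun e => Z e ω = true).card : ℝ) < (r : ℝ) - 1}
      ⊆ (⋃ e ∈ A, {ω | Z e ω = false}) ∪ T := by
    intro ω hω
    by_cases hU : ω ∈ ⋃ e ∈ A, {ω | Z e ω = false}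
    · exact Or.inl hU
    · right
      simp only [Set.mem_iUnion, Set.mem_setOf_eq, not_exists] at hU
      have hAll : ∀ e ∈ A, Z e ω = true := by
        intro e he
        have := hU e he
        simpa using this
      have hsubf : A ∪ (B.filter fun e => Z e ω = true) ⊆ t.filter fun e => Z e ω = true := by
        intro e he
        rcases Finset.mem_union.mp he with h | h
        · exact Finset.mem_filter.mpr ⟨(Finset.mem_filter.mp h).1, hAll e h⟩
        · have h' := Finset.mem_filter.mp h
          exact Finset.mem_filter.mpr ⟨(Finset.mem_filter.mp h'.1).1, h'.2⟩
      have hdisj : Disjoint A (B.filter fun e => Z e ω = true) := by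
        refine Finset.disjoint_left.mpr fun e heA heB => ?_
        have h1 := (Finset.mem_filter.mp heA).2
        have h2 := (Finset.mem_filter.mp (Finset.mem_filter.mp heB).1).2
        linarith
      have hcard : k + (B.filter fun e => Z e ω = true).card
          ≤ (t.filter fun e => Z e ω = true).card := by
        rw [hk_def, ← Finset.card_union_of_disjoint hdisj]
        exact Finset.card_le_card hsubf
      have hωS : ((t.filter fun e => Z e ω = true).card : ℝ) < (r : ℝ) - 1 := hω
      have hlt : ((k + (B.filter fun e => Z e ω = true).card : ℕ) : ℝ) + 1 < (r : ℝ) := by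
        have : ((k + (B.filter fun e => Z e ω = true).card : ℕ) : ℝ)
            ≤ ((t.filter fun e => Z e ω = true).card : ℝ) := by exact_mod_cast hcard
        linarith
    -- integrality
      have hnat : k + (B.filter fun e => Z e ω = true).card + 1 < r := by
        exact_mod_cast hlt
      have hnat2 : k + (B.filter fun e => Z e ω = true).card + 2 ≤ r := hnat
      have hreal : (k : ℝ) + ((B.filter fun e => Z e ω = true).card : ℝ) + 2 ≤ (r : ℝ) := by
        exact_mod_cast hnat2
      show XB ω ≤ me - 1
      rw [hXBapp ω, hme_def]
      linarith
  have hμmono : μ {ω | ((t.filter fun e => Z e ω = true).card : ℝ) < (r : ℝ) - 1} ≤ μ T := by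
    calc μ {ω | ((t.filter fun e => Z e ω = true).card : ℝ) < (r : ℝ) - 1}
        ≤ μ ((⋃ e ∈ A, {ω | Z e ω = false}) ∪ T) := measure_mono hsub
      _ ≤ μ (⋃ e ∈ A, {ω | Z e ω = false}) + μ T := measure_union_le _ _
      _ = μ T := by rw [hU0, zero_add]
  have hμS_le : (μ {ω | ((t.filter fun e => Z e ω = true).card : ℝ) < (r : ℝ) - 1}).toReal
      ≤ (μ T).toReal := ENNReal.toReal_mono (measure_ne_top μ T) hμmono
  rcases le_or_gt r (k + 1) with hk | hk
  · -- enough capped edges: T is empty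
    have hTempty : T = ∅ := by
      ext ω
      simp only [hT_def, Set.mem_setOf_eq, Set.mem_empty_iff_false, iff_false, not_le]
      have hkr : (r : ℝ) ≤ (k : ℝ) + 1 := by exact_mod_cast hk
      have h0 := hXB0 ω
      rw [hme_def]; linarith
    rw [hTempty] at hμS_le
    simp only [measure_empty, ENNReal.toReal_zero] at hμS_le
    refine hμS_le.trans ?_
    positivity
  · -- Chernoff bound
    have hkr : (k : ℝ) + 2 ≤ (r : ℝ) := by exact_mod_cast hk
    have hme1 : 1 ≤ me := by rw [hme_def]; linarith
    have hXBmeas : Measurable XB := by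
      have h := Finset.measurable_sum B (fun e _ => hYmeas e)
      have heq : XB = fun a => ∑ i ∈ B, Y i a := by funext ω; rw [hXB_def, Finset.sum_apply]
      rw [heq]; exact h
    have hint : Integrable (fun ω => exp (s * XB ω)) μ := by
      refine (integrable_const (1:ℝ)).mono' ((hXBmeas.const_mul s).exp.aestronglyMeasurable) ?_
      refine ae_of_all _ fun ω => ?_
      rw [Real.norm_eq_abs, Real.abs_exp]
      exact Real.exp_le_one_iff.mpr (mul_nonpos_iff.mpr (Or.inr ⟨hs0, hXB0 ω⟩))
    have hcher := measure_le_le_exp_mul_mgf (μ := μ) (X := XB) (me - 1) hs0 hint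
    -- mgf of each Bernoulli
    have hmgfY : ∀ e ∈ B, mgf (Y e) μ s = 1 + p e * (α - 1) := by
      intro e _
      have heq : (fun ω => exp (s * Y e ω))
          = fun ω => Set.indicator {ω | Z e ω = true} (fun _ => α - 1) ω + 1 := by
        funext ω
        by_cases h : Z e ω = true
        · have hmem : ω ∈ {ω | Z e ω = true} := h
          simp [hY_def, h, Set.indicator_of_mem hmem, hes]
        · have hmem : ω ∉ {ω | Z e ω = true} := h
          simp [hY_def, h, Set.indicator_of_notMem hmem]
      rw [mgf, heq, integral_add ((integrable_const _).indicator (hms e)) (integrable_const 1),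
        integral_indicator_const _ (hms e), integral_const, probReal_univ]
      simp only [smul_eq_mul, ENNReal.toReal_one, one_smul]
      rw [measureReal_def, hZprob e]
      ring
    have hmgf : mgf XB μ s = ∏ e ∈ B, (1 + p e * (α - 1)) := by
      rw [hXB_def, hYindep.mgf_sum hYmeas B]
      exact Finset.prod_congr rfl hmgfY
    have hprod : ∏ e ∈ B, (1 + p e * (α - 1)) ≤ exp ((α - 1) * ∑ e ∈ B, p e) := by
      calc ∏ e ∈ B, (1 + p e * (α - 1)) ≤ ∏ e ∈ B, exp (p e * (α - 1)) := by
            refine Finset.prod_le_prod (fun e _ => ?_) (fun e _ => ?_)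
            · nlinarith [hp0 e, hp1 e]
            · linarith [Real.add_one_le_exp (p e * (α - 1))]
        _ = exp (∑ e ∈ B, p e * (α - 1)) := (Real.exp_sum _ _).symm
        _ = exp ((α - 1) * ∑ e ∈ B, p e) := by rw [← Finset.sum_mul, mul_comm]
    -- lower bound on the expected number of selections among B
    have hpB : ∀ e ∈ B, p e = d e / α := by
      intro e he
      have hde : d e < α := (Finset.mem_filter.mp he).2
      exact min_eq_right ((div_le_one hα).mpr hde.le)
    have hsumB : me / α ≤ ∑ e ∈ B, p e := by
      have hAB : A ∪ B = t := by
        ext e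
        simp only [hA_def, hB_def, Finset.mem_union, Finset.mem_filter]
        constructor
        · rintro (h | h) <;> exact h.1
        · intro h
          rcases le_or_gt α (d e) with h' | h'
          · exact Or.inl ⟨h, h'⟩
          · exact Or.inr ⟨h, h'⟩
      have hABdisj : Disjoint A B := by
        refine Finset.disjoint_left.mpr fun e heA heB => ?_
        have h1 := (Finset.mem_filter.mp heA).2
        have h2 := (Finset.mem_filter.mp heB).2
        linarith
      have hsplit : ∑ e ∈ A, d e + ∑ e ∈ B, d e = ∑ e ∈ t, d e := by
        rw [← Finset.sum_union hABdisj, hAB]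
      have hAsum : ∑ e ∈ A, d e ≤ (k : ℝ) := by
        calc ∑ e ∈ A, d e ≤ ∑ e ∈ A, 1 := Finset.sum_le_sum (fun e _ => hd1 e)
          _ = (k : ℝ) := by simp [hk_def]
      have hBsum : me ≤ ∑ e ∈ B, d e := by rw [hme_def]; linarith
      rw [Finset.sum_congr rfl hpB, ← Finset.sum_div]
      exact div_le_div_of_nonneg_right hBsum hα.le
    -- assemble
    have hlog : -s ≤ 1 / α - 1 := by
      have h := Real.log_le_sub_one_of_pos (inv_pos.mpr hα)
      rw [Real.log_inv] at h
      rw [hs_def]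
      rw [one_div]
      linarith
    have hexp_le : -s * (me - 1) + (α - 1) * ∑ e ∈ B, p e ≤ 1 - 1 / α := by
      have h1 : -s * (me - 1) ≤ (1 / α - 1) * (me - 1) :=
        mul_le_mul_of_nonneg_right hlog (by linarith)
      have h2 : (α - 1) * ∑ e ∈ B, p e ≤ (α - 1) * (me / α) :=
        mul_le_mul_of_nonpos_left hsumB (by linarith)
      have h3 : (1 / α - 1) * (me - 1) + (α - 1) * (me / α) = 1 - 1 / α := by
        field_simp
        ring
      linarith
    calc (μ {ω | ((t.filter fun e => Z e ω = true).card : ℝ) < (r : ℝ) - 1}).toReal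
        ≤ (μ T).toReal := hμS_le
      _ ≤ exp (-s * (me - 1)) * mgf XB μ s := hcher
      _ ≤ exp (-s * (me - 1)) * exp ((α - 1) * ∑ e ∈ B, p e) := by
          refine mul_le_mul_of_nonneg_left ?_ (exp_pos _).le
          rw [hmgf]; exact hprod
      _ = exp (-s * (me - 1) + (α - 1) * ∑ e ∈ B, p e) := (Real.exp_add _ _).symm
      _ ≤ exp (1 - 1 / α) := Real.exp_le_exp.mpr hexp_le
      _ ≤ exp 4 * exp (-(1 / (2 * α))) := by
          rw [← Real.exp_add]
          apply Real.exp_le_exp.mpr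
          have h1 : 1 / (2 * α) = (1 / α) / 2 := by ring
          have h2 : 0 < 1 / α := by positivity
          linarith
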